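/- Let G = (V,A) be a finite simple graph without isolated vertices and n = n(G) = W ⊕ z its graph algebra over a field k of characteristic zero. If G has a vertex e of degree 1, with α the unique edge incident to e, then e∧α is a nonzero n-invariant element of W∧z ⊆ Λ²n; in particular (Λ²n)^n ≠ Λ²z. -/

import Mathlib

open TensorProduct

set_option synthInstance.maxHeartbeats 1000000
set_option maxHeartbeats 1000000

/-- The adjoint action of a Lie algebra `g` on `g ⊗ g`, determined by
`x · (a ⊗ b) = ⁅x,a⁆ ⊗ b + a ⊗ ⁅x,b⁆`. -/
noncomputable def tAct (k g : Type*) [CommRing k] [LieRing g] [LieAlgebra k g] (x : g) :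
    g ⊗[k] g →ₗ[k] g ⊗[k] g :=
  TensorProduct.map (LieAlgebra.ad k g x) LinearMap.id
    + TensorProduct.map LinearMap.id (LieAlgebra.ad k g x)

/-- For submodules `P Q ⊆ g`, the image of `P ⊗ Q` in `g ⊗ g`. -/
noncomputable def tsub (k g : Type*) [CommRing k] [AddCommGroup g] [Module k g]
    (P Q : Submodule k g) : Submodule k (g ⊗[k] g) :=
  LinearMap.range (TensorProduct.map P.subtype Q.subtype)

/-- The degree (valency) of a vertex `e` in the graph with edge set `A` and
endpoint maps `src`, `tgt`. -/
def deg {V A : Type*} [Fintype A] [DecidableEq V] (src tgt : A → V) (e : V) : ℕ :=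
  (Finset.univ.filter (fun a : A => src a = e ∨ tgt a = e)).card

/-- in the graph algebra `n(G) = W ⊕ z` of a finite simple graph without
isolated vertices (presented by a basis indexed by vertices and edges, with
`⁅e_i, e_j⁆ = α` for each edge `α` joining `i` and `j`), if `e` is a vertex of degree 1
and `α` its unique incident edge, then `e∧α` (as the antisymmetric tensor
`e ⊗ α − α ⊗ e`) is a nonzero invariant element of `W∧z`; in particular it is not in
`Λ²z`, so `(Λ²n)^n ≠ Λ²z`. -/
theorem stmt8 (k V A N : Type*) [Field k] [CharZero k]
    [Fintype V] [Fintype A] [DecidableEq V] [DecidableEq A]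
    [LieRing N] [LieAlgebra k N]
    (src tgt : A → V)
    (hloop : ∀ a, src a ≠ tgt a)
    (hsimple : ∀ a b : A,
      (src a = src b ∧ tgt a = tgt b) ∨ (src a = tgt b ∧ tgt a = src b) → a = b)
    (B : Module.Basis (V ⊕ A) k N)
    (hbz : ∀ (a : A) (x : N), ⁅B (Sum.inr a), x⁆ = 0)
    (hbe : ∀ a : A, ⁅B (Sum.inl (src a)), B (Sum.inl (tgt a))⁆ = B (Sum.inr a))
    (hbe0 : ∀ i j : V,
      (∀ a : A, ¬((src a = i ∧ tgt a = j) ∨ (src a = j ∧ tgt a = i))) →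
      ⁅B (Sum.inl i), B (Sum.inl j)⁆ = 0)
    (hnoiso : ∀ e : V, 0 < deg src tgt e)
    (e : V) (he : deg src tgt e = 1)
    (α : A) (hα : src α = e ∨ tgt α = e) :
    (B (Sum.inl e) ⊗ₜ[k] B (Sum.inr α) - B (Sum.inr α) ⊗ₜ[k] B (Sum.inl e)) ≠ 0
    ∧ (∀ x : N,
        tAct k N x (B (Sum.inl e) ⊗ₜ[k] B (Sum.inr α) - B (Sum.inr α) ⊗ₜ[k] B (Sum.inl e)) = 0)
    ∧ (B (Sum.inl e) ⊗ₜ[k] B (Sum.inr α) - B (Sum.inr α) ⊗ₜ[k] B (Sum.inl e)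
        ∈ tsub k N (Submodule.span k (Set.range fun i : V => B (Sum.inl i)))
            (Submodule.span k (Set.range fun a : A => B (Sum.inr a)))
          ⊔ tsub k N (Submodule.span k (Set.range fun a : A => B (Sum.inr a)))
            (Submodule.span k (Set.range fun i : V => B (Sum.inl i))))
    ∧ (B (Sum.inl e) ⊗ₜ[k] B (Sum.inr α) - B (Sum.inr α) ⊗ₜ[k] B (Sum.inl e)
        ∉ tsub k N (Submodule.span k (Set.range fun a : A => B (Sum.inr a)))
            (Submodule.span k (Set.range fun a : A => B (Sum.inr a)))) := by
  classical
  set E := B (Sum.inl e) with hE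
  set Aα := B (Sum.inr α) with hAα
  -- uniqueness of the incident edge
  have huniq : ∀ a : A, (src a = e ∨ tgt a = e) → a = α := by
    intro a ha
    obtain ⟨b, hb⟩ := Finset.card_eq_one.mp he
    have h1 : a ∈ Finset.univ.filter (fun a : A => src a = e ∨ tgt a = e) := by
      simp [ha]
    have h2 : α ∈ Finset.univ.filter (fun a : A => src a = e ∨ tgt a = e) := by
      simp [hα]
    rw [show (Finset.univ.filter (fun a : A => src a = e ∨ tgt a = e)) = {b} from hb] at h1 h2
    simp only [Finset.mem_singleton] at h1 h2
    rw [h1, h2]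
  -- brackets with E land in span {Aα}
  have key : ∀ x : N, ⁅x, E⁆ ∈ Submodule.span k {Aα} := by
    have hb : ∀ v : V ⊕ A, ⁅B v, E⁆ ∈ Submodule.span k {Aα} := by
      intro v
      rcases v with i | a
      · by_cases h : ∃ a : A, (src a = i ∧ tgt a = e) ∨ (src a = e ∧ tgt a = i)
        · obtain ⟨a, hcase⟩ := h
          have haα : a = α := by
            apply huniq
            rcases hcase with ⟨_, h2⟩ | ⟨h1, _⟩
            · right; exact h2
            · left; exact h1
          subst haα
          rcases hcase with ⟨h1, h2⟩ | ⟨h1, h2⟩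
          · have := hbe a
            rw [h1, h2] at this
            rw [hE, this]
            exact Submodule.mem_span_singleton_self _
          · have := hbe a
            rw [h1, h2] at this
            have hsk : ⁅B (Sum.inl i), E⁆ = -B (Sum.inr a) := by
              rw [← this, hE, ← lie_skew]
            rw [hsk]
            exact neg_mem (Submodule.mem_span_singleton_self _)
        · have := hbe0 i e (fun a hc => h ⟨a, hc⟩)
          rw [hE, this]
          exact Submodule.zero_mem _
      · rw [hbz a]
        exact Submodule.zero_mem _
    intro x
    have hx : x ∈ Submodule.span k (Set.range B) := by
      rw [B.span_eq]; trivial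
    induction hx using Submodule.span_induction with
    | mem y hy => obtain ⟨v, rfl⟩ := hy; exact hb v
    | zero => simp
    | add a b _ _ ha hb' => rw [add_lie]; exact add_mem ha hb'
    | smul c a _ ha => rw [smul_lie]; exact Submodule.smul_mem _ _ ha
  -- the tensor basis
  let Bt : Module.Basis ((V ⊕ A) × (V ⊕ A)) k (N ⊗[k] N) := Module.Basis.tensorProduct B B
  have hBt : ∀ i j, Bt (i, j) = B i ⊗ₜ[k] B j := fun i j =>
    Module.Basis.tensorProduct_apply B B i j
  -- repr vanishing on span of edges at vertex indices
  have hreprz : ∀ q ∈ Submodule.span k (Set.range fun a : A => B (Sum.inr a)),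
      ∀ i : V, B.repr q (Sum.inl i) = 0 := by
    intro q hq i
    induction hq using Submodule.span_induction with
    | mem y hy =>
      obtain ⟨a, rfl⟩ := hy
      simp [Module.Basis.repr_self, Finsupp.single_apply]
    | zero => simp
    | add a b _ _ ha hb' => simp [ha, hb']
    | smul c a _ ha => simp [ha]
  refine ⟨?_, ?_, ?_, ?_⟩
  · -- nonzero
    intro hzero
    rw [sub_eq_zero, ← hBt, ← hBt] at hzero
    have := Bt.injective hzero
    simp at this
  · -- invariant
    intro x
    obtain ⟨c, hc⟩ := Submodule.mem_span_singleton.mp (key x)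
    have hz : ⁅x, Aα⁆ = 0 := by
      rw [hAα, ← lie_skew, hbz]; simp
    simp only [tAct, LinearMap.add_apply, map_sub, TensorProduct.map_tmul,
      LinearMap.id_coe, id_eq, LieAlgebra.ad_apply, ← hc, hz,
      TensorProduct.zero_tmul, TensorProduct.tmul_zero,
      TensorProduct.smul_tmul', TensorProduct.tmul_smul]
    abel
  · -- in W⊗z ⊔ z⊗W
    have hEP : E ∈ Submodule.span k (Set.range fun i : V => B (Sum.inl i)) :=
      Submodule.subset_span ⟨e, rfl⟩
    have hAQ : Aα ∈ Submodule.span k (Set.range fun a : A => B (Sum.inr a)) :=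
      Submodule.subset_span ⟨α, rfl⟩
    have h1 : E ⊗ₜ[k] Aα ∈ tsub k N
        (Submodule.span k (Set.range fun i : V => B (Sum.inl i)))
        (Submodule.span k (Set.range fun a : A => B (Sum.inr a))) :=
      ⟨(⟨E, hEP⟩ : _) ⊗ₜ[k] (⟨Aα, hAQ⟩ : _), by simp [TensorProduct.map_tmul]⟩
    have h2 : Aα ⊗ₜ[k] E ∈ tsub k N
        (Submodule.span k (Set.range fun a : A => B (Sum.inr a)))
        (Submodule.span k (Set.range fun i : V => B (Sum.inl i))) :=
      ⟨(⟨Aα, hAQ⟩ : _) ⊗ₜ[k] (⟨E, hEP⟩ : _), by simp [TensorProduct.map_tmul]⟩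
    exact sub_mem (Submodule.mem_sup_left h1) (Submodule.mem_sup_right h2)
  · -- not in z⊗z
    set Q := Submodule.span k (Set.range fun a : A => B (Sum.inr a)) with hQ
    intro hmem
    obtain ⟨t, ht⟩ := hmem
    -- coordinate functional at (inl e, inr α) vanishes on the image
    have hvan : ∀ t : Q ⊗[k] Q,
        Bt.repr (TensorProduct.map Q.subtype Q.subtype t) (Sum.inl e, Sum.inr α) = 0 := by
      intro t
      induction t using TensorProduct.induction_on with
      | zero => simp
      | tmul p q =>
        rw [TensorProduct.map_tmul]
        have := Module.Basis.tensorProduct_repr_tmul_apply B B (Q.subtype p) (Q.subtype q)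
          (Sum.inl e) (Sum.inr α)
        rw [show Bt.repr = (Module.Basis.tensorProduct B B).repr from rfl, this,
          hreprz (Q.subtype p) p.2 e]
        simp
      | add a b ha hb' => rw [map_add, map_add]; simp [ha, hb']
    have h1 := hvan t
    rw [ht] at h1
    rw [map_sub] at h1
    have he1 : Bt.repr (E ⊗ₜ[k] Aα) (Sum.inl e, Sum.inr α) = 1 := by
      rw [← hBt, show Bt.repr = (Module.Basis.tensorProduct B B).repr from rfl]
      rw [show (Module.Basis.tensorProduct B B) ((Sum.inl e : V ⊕ A), (Sum.inr α : V ⊕ A))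
        = Bt ((Sum.inl e : V ⊕ A), (Sum.inr α : V ⊕ A)) from rfl]
      simp [Bt]
    have he2 : Bt.repr (Aα ⊗ₜ[k] E) (Sum.inl e, Sum.inr α) = 0 := by
      rw [show Bt.repr = (Module.Basis.tensorProduct B B).repr from rfl,
        Module.Basis.tensorProduct_repr_tmul_apply, hAα]
      simp [Module.Basis.repr_self, Finsupp.single_apply]
    rw [Finsupp.sub_apply, he1, he2] at h1
    norm_num at h1
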